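/- For the quaternions $\mathbb{H}$ with its standard Euclidean inner product, if $u, w \in \mathbb{H}$ are orthogonal unit quaternions and $x, y \in \mathbb{H}$ are arbitrary unit quaternions, then $\langle xu, yw \rangle = -\langle xw, yu \rangle$. -/

import Mathlib

open scoped Quaternion

/-- For the quaternions with their standard Euclidean inner product, if `u, w`
are orthogonal unit quaternions and `x, y` are arbitrary unit quaternions,
then `⟨x*u, y*w⟩ = -⟨x*w, y*u⟩`. -/
theorem quaternion_inner_antisymm
    (u w x y : ℍ[ℝ]) (hu : ‖u‖ = 1) (hw : ‖w‖ = 1)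
    (huw : (inner ℝ u w : ℝ) = 0) (hx : ‖x‖ = 1) (hy : ‖y‖ = 1) :
    (inner ℝ (x * u) (y * w) : ℝ) = -(inner ℝ (x * w) (y * u) : ℝ) := by
  simp only [Quaternion.inner_def, Quaternion.re_mul, Quaternion.re_star,
    Quaternion.imI_star, Quaternion.imJ_star, Quaternion.imK_star,
    Quaternion.imI_mul, Quaternion.imJ_mul, Quaternion.imK_mul] at huw ⊢
  linear_combination (2 * (x.re * y.re + x.imI * y.imI + x.imJ * y.imJ + x.imK * y.imK)) * huw
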